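/- Fix k ≥ 1 and two distinct points a, b ∈ {True,False}^k. For an and/or tree shape s, write P_s^{10} for the probability that the uniform random k-labelling ŝ satisfies f[ŝ](a) = True and f[ŝ](b) = False. Let t be an and/or tree shape whose root has r ≥ 2 children, with root subtrees t_1, …, t_r. Then P_t^{10} = 2^{−r} − ∏_{i=1}^r (1/2 − P_{t_i}^{10}). -/

import Mathlib

/-- A plane rooted tree (shape of an and/or tree). -/
inductive PTree where
  | leaf : PTree
  | node : List PTree → PTree

/-- An and/or tree shape: every internal node has at least two children. -/
inductive IsShape : PTree → Prop
  | leaf : IsShape .leaf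
  | node (cs : List PTree) : 2 ≤ cs.length → (∀ c ∈ cs, IsShape c) → IsShape (.node cs)

/-- The size of a shape: its number of leaves. -/
def PTree.size : PTree → ℕ
  | .leaf => 1
  | .node cs => (cs.attach.map (fun ⟨c, _⟩ => c.size)).sum
decreasing_by
  have := List.sizeOf_lt_of_mem ‹c ∈ cs›; simp only [PTree.node.sizeOf_spec]; omega

/-- The saturation level of a shape: the minimal depth of a leaf. -/
def PTree.satLevel : PTree → ℕ
  | .leaf => 0
  | .node cs => ((cs.attach.map (fun ⟨c, _⟩ => c.satLevel)).min?.getD 0) + 1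
decreasing_by
  have := List.sizeOf_lt_of_mem ‹c ∈ cs›; simp only [PTree.node.sizeOf_spec]; omega

/-- A `k`-labelled and/or tree: internal nodes carry a connective
(`true` = ∧, `false` = ∨), leaves carry a literal: a variable index in `Fin k`
together with a polarity (`true` = positive, `false` = negated). -/
inductive LTree (k : ℕ) where
  | leaf : Fin k → Bool → LTree k
  | node : Bool → List (LTree k) → LTree k

/-- Evaluation of a labelled and/or tree, with the convention that a childless
internal node labelled ∧ (resp. ∨) evaluates to `false` (resp. `true`). -/
def LTree.eval {k : ℕ} : LTree k → (Fin k → Bool) → Bool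
  | .leaf i pos, x => if pos then x i else !(x i)
  | .node c cs, x =>
    if cs.isEmpty then !c
    else if c then (cs.attach.map (fun ⟨t, _⟩ => t.eval x)).all (fun b => b)
    else (cs.attach.map (fun ⟨t, _⟩ => t.eval x)).any (fun b => b)
decreasing_by
  all_goals (have := List.sizeOf_lt_of_mem ‹t ∈ cs›; simp only [LTree.node.sizeOf_spec]; omega)

/-- A valid labelled and/or tree: every internal node has at least two children. -/
inductive IsLShape {k : ℕ} : LTree k → Prop
  | leaf (i : Fin k) (pos : Bool) : IsLShape (.leaf i pos)
  | node (c : Bool) (cs : List (LTree k)) : 2 ≤ cs.length →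
      (∀ t ∈ cs, IsLShape t) → IsLShape (.node c cs)

/-- The size of a labelled tree: its number of leaves. -/
def LTree.size {k : ℕ} : LTree k → ℕ
  | .leaf _ _ => 1
  | .node _ cs => (cs.attach.map (fun ⟨t, _⟩ => t.size)).sum
decreasing_by
  have := List.sizeOf_lt_of_mem ‹t ∈ cs›; simp only [LTree.node.sizeOf_spec]; omega

/-- The list of leaf labels of a labelled tree. -/
def LTree.leaves {k : ℕ} : LTree k → List (Fin k × Bool)
  | .leaf i pos => [(i, pos)]
  | .node _ cs => (cs.attach.map (fun ⟨t, _⟩ => t.leaves)).flatten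
decreasing_by
  have := List.sizeOf_lt_of_mem ‹t ∈ cs›; simp only [LTree.node.sizeOf_spec]; omega

/-- The list of all `k`-labellings of a given shape (each one equally likely
under the uniform random labelling). -/
def labellings (k : ℕ) : PTree → List (LTree k)
  | .leaf => (List.finRange k).flatMap (fun i => [LTree.leaf i true, LTree.leaf i false])
  | .node cs => [true, false].flatMap (fun c =>
      ((cs.attach.map (fun ⟨t, _⟩ => labellings k t)).sections).map (fun l => LTree.node c l))
decreasing_by
  have := List.sizeOf_lt_of_mem ‹t ∈ cs›; simp only [PTree.node.sizeOf_spec]; omega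

open Classical in
/-- The probability that the uniform random `k`-labelling of the shape `t`
computes a Boolean function belonging to the set `s`. -/
noncomputable def Pr (k : ℕ) (t : PTree) (s : Set ((Fin k → Bool) → Bool)) : ℝ :=
  (((labellings k t).filter (fun τ => decide (τ.eval ∈ s))).length : ℝ)
    / ((labellings k t).length : ℝ)

/-- `Pfun k t g` = `P_k[t](g)`: the probability that the uniform random
`k`-labelling of the shape `t` computes exactly the Boolean function `g`. -/
noncomputable def Pfun (k : ℕ) (t : PTree) (g : (Fin k → Bool) → Bool) : ℝ :=
  Pr k t {g}

/-- `x_i` is an essential variable of `f`. -/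
def Essential {k : ℕ} (f : (Fin k → Bool) → Bool) (i : Fin k) : Prop :=
  ∃ x : Fin k → Bool, f (Function.update x i true) ≠ f (Function.update x i false)

open Classical in
/-- The number of essential variables of `f`. -/
noncomputable def essCount {k : ℕ} (f : (Fin k → Bool) → Bool) : ℕ :=
  (Finset.univ.filter (fun i => Essential f i)).card

open Classical in
/-- The complexity `L(f)`: the minimal number of leaves of a valid `k`-labelled
and/or tree computing `f`, with the convention `L(True) = L(False) = 0`. -/
noncomputable def complexity (k : ℕ) (f : (Fin k → Bool) → Bool) : ℕ :=
  if f = (fun _ => true) ∨ f = (fun _ => false) then 0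
  else sInf {n | ∃ τ : LTree k, IsLShape τ ∧ τ.eval = f ∧ τ.size = n}

lemma list_all_map' {α β} (l : List α) (f : α → β) (p : β → Bool) :
    (l.map f).all p = l.all (fun x => p (f x)) := by
  induction l with
  | nil => rfl
  | cons a l ih => simp [ih]

lemma list_any_map' {α β} (l : List α) (f : α → β) (p : β → Bool) :
    (l.map f).any p = l.any (fun x => p (f x)) := by
  induction l with
  | nil => rfl
  | cons a l ih => simp [ih]

lemma eval_node {k : ℕ} (c : Bool) (l : List (LTree k)) (hl : l ≠ []) (x : Fin k → Bool) :
    (LTree.node c l).eval x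
      = if c then l.all (fun t => t.eval x) else l.any (fun t => t.eval x) := by
  rw [LTree.eval]
  simp [List.isEmpty_iff, hl, List.attach_map_val, list_all_map', list_any_map', Function.comp_def]

example (k : ℕ) (i : Fin k) (pos : Bool) (x : Fin k → Bool) :
    (LTree.leaf i pos).eval x = if pos then x i else !(x i) := by rw [LTree.eval]

example (k : ℕ) : labellings k .leaf
    = (List.finRange k).flatMap (fun i => [LTree.leaf i true, LTree.leaf i false]) := by
  rw [labellings]

lemma length_sections {α} (Ls : List (List α)) :
    Ls.sections.length = (Ls.map List.length).prod := by
  induction Ls with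
  | nil => rfl
  | cons L Ls ih =>
    show ((Ls.sections).flatMap fun s => L.map (fun a => a :: s)).length = _
    simp [List.length_flatMap, Function.comp_def, List.map_const', ih]
    ring

lemma sum_map_ite {α} (l : List α) (q : α → Bool) (c : ℕ) :
    (l.map (fun s => if q s then c else 0)).sum = c * (l.filter q).length := by
  induction l with
  | nil => simp
  | cons a l ih =>
    by_cases h : q a <;> simp [h, ih, List.filter_cons, Nat.mul_succ] <;> ring

lemma count_sections_all {α} (p : α → Bool) (Ls : List (List α)) :
    ((Ls.sections.filter (fun l => l.all p)).length)
      = (Ls.map (fun L => (L.filter p).length)).prod := by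
  induction Ls with
  | nil => rfl
  | cons L Ls ih =>
    show (((Ls.sections).flatMap fun s => L.map (fun a => a :: s)).filter _).length = _
    rw [List.filter_flatMap, List.length_flatMap]
    have key : ∀ s : List α, ((List.filter (fun l => l.all p) (L.map (fun a => a :: s))).length)
        = if s.all p then (L.filter p).length else 0 := by
      intro s
      rw [List.filter_map, List.length_map]
      have : ((fun l => l.all p) ∘ (fun a => a :: s)) = fun a => p a && s.all p := by
        funext a; simp
      rw [this]
      by_cases h : s.all p
      · simp [h]
      · simp only [Bool.not_eq_true] at h
        simp [h]
    simp only [Function.comp_def, key]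
    rw [sum_map_ite, ih]
    simp [List.prod_cons]

lemma filter_split {α} (l : List α) (p q : α → Bool) :
    (l.filter fun x => p x && !q x).length + (l.filter fun x => p x && q x).length
      = (l.filter p).length := by
  induction l with
  | nil => rfl
  | cons a l ih =>
    by_cases hp : p a <;> by_cases hq : q a <;>
      simp [List.filter_cons, hp, hq] <;> omega

lemma filter_neg_length {α} (l : List α) (p : α → Bool) :
    (l.filter fun x => !p x).length + (l.filter p).length = l.length := by
  induction l with
  | nil => rfl
  | cons a l ih => by_cases hp : p a <;> simp [List.filter_cons, hp] <;> omega

lemma list_all_and {α} (l : List α) (p q : α → Bool) :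
    (l.all p && l.all q) = l.all (fun x => p x && q x) := by
  induction l with
  | nil => rfl
  | cons a l ih => simp only [List.all_cons, ← ih]; cases p a <;> cases q a <;> simp

lemma filter_and_comm {α} (l : List α) (p q : α → Bool) :
    (l.filter fun x => p x && q x) = (l.filter fun x => q x && p x) := by
  congr 1; funext x; exact Bool.and_comm _ _

lemma cast_prod_map {α} (cs : List α) (f : α → ℕ) :
    (((cs.map f).prod : ℕ) : ℝ) = (cs.map fun c => (f c : ℝ)).prod := by
  induction cs with
  | nil => simp
  | cons a l ih => simp [ih]

lemma prod_map_div {α} (cs : List α) (f g : α → ℝ) (hg : ∀ c ∈ cs, g c ≠ 0) :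
    (cs.map f).prod / (cs.map g).prod = (cs.map fun c => f c / g c).prod := by
  induction cs with
  | nil => simp
  | cons a l ih =>
    simp only [List.map_cons, List.prod_cons]
    rw [← ih (fun c hc => hg c (List.mem_cons_of_mem _ hc)), mul_div_mul_comm]

lemma list_prod_pos (l : List ℕ) (h : ∀ a ∈ l, 0 < a) : 0 < l.prod := by
  induction l with
  | nil => simp
  | cons a l ih =>
    simp only [List.prod_cons]
    exact Nat.mul_pos (h a (by simp)) (ih fun b hb => h b (List.mem_cons_of_mem _ hb))

lemma labellings_node (k : ℕ) (cs : List PTree) :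
    labellings k (.node cs) = ((cs.map (labellings k)).sections.map (LTree.node true))
      ++ ((cs.map (labellings k)).sections.map (LTree.node false)) := by
  rw [labellings]
  simp [List.attach_map_val, List.flatMap]

lemma half_aux (k : ℕ) (hk : 1 ≤ k) :
    ∀ (n : ℕ) (t : PTree), sizeOf t ≤ n → IsShape t →
      0 < (labellings k t).length ∧
      ∀ x : Fin k → Bool,
        2 * ((labellings k t).filter (fun τ => τ.eval x)).length
          = (labellings k t).length := by
  intro n
  induction n with
  | zero => intro t hle ht; exfalso; cases t <;> simp at hle
  | succ n ih =>
    intro t hle ht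
    cases ht with
    | leaf =>
      rw [labellings]
      constructor
      · rw [List.length_flatMap]
        simp only [Function.comp_def, List.length_cons, List.length_nil]
        rw [List.map_const', List.sum_replicate]
        simp; omega
      · intro x
        rw [List.filter_flatMap, List.length_flatMap, List.length_flatMap]
        have h1 : ∀ i : Fin k,
            (List.filter (fun τ => τ.eval x) [LTree.leaf i true, LTree.leaf i false]).length
              = 1 := by
          intro i
          cases h : x i <;> simp [List.filter, LTree.eval, h]
        simp only [h1, List.length_cons, List.length_nil]
        rw [List.map_const', List.map_const', List.sum_replicate, List.sum_replicate]
        simp; ring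
    | node cs h2 hcs =>
      have hch : ∀ c ∈ cs, 0 < (labellings k c).length ∧
          ∀ x, 2 * ((labellings k c).filter (fun τ => τ.eval x)).length
            = (labellings k c).length := by
        intro c hc
        refine ih c ?_ (hcs c hc)
        have := List.sizeOf_lt_of_mem hc
        simp only [PTree.node.sizeOf_spec] at hle
        omega
      set Ls := cs.map (labellings k) with hLs
      have hSlen : Ls.sections.length = (cs.map fun c => (labellings k c).length).prod := by
        rw [length_sections, hLs, List.map_map]; rfl
      have hslen_pos : 0 < Ls.sections.length := by
        rw [hSlen]
        exact list_prod_pos _ (by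
          intro a ha
          simp only [List.mem_map] at ha
          obtain ⟨c, hc, rfl⟩ := ha
          exact (hch c hc).1)
      constructor
      · rw [labellings_node, ← hLs]
        simp only [List.length_append, List.length_map]
        omega
      · intro x
        rw [labellings_node]
        rw [List.filter_append, List.length_append,
            List.filter_map, List.filter_map, List.length_map, List.length_map]
        -- predicates on sections
        have hne : ∀ s ∈ Ls.sections, s ≠ [] := by
          intro s hs h
          subst h
          have hlen := (List.mem_sections.1 hs).length_eq
          simp [hLs] at hlen
          omega
        have htrue : (Ls.sections.filter ((fun τ => τ.eval x) ∘ (LTree.node true))).length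
            = (cs.map fun c => ((labellings k c).filter (fun τ => τ.eval x)).length).prod := by
          rw [List.filter_congr (fun s hs => ?_), count_sections_all (fun τ => τ.eval x) Ls]
          · rw [hLs, List.map_map]; rfl
          · show ((LTree.node true s).eval x) = s.all fun t => t.eval x
            rw [eval_node _ _ (hne s hs)]; simp
        have e1 : (cs.map fun c => ((labellings k c).filter (fun τ => !(τ.eval x))).length).prod
            = (Ls.sections.filter (fun s => s.all (fun t => !(t.eval x)))).length := by
          rw [count_sections_all, hLs, List.map_map]; rfl
        have hfalse : (Ls.sections.filter ((fun τ => τ.eval x) ∘ (LTree.node false))).length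
              + (cs.map fun c => ((labellings k c).filter (fun τ => !(τ.eval x))).length).prod
            = Ls.sections.length := by
          rw [List.filter_congr (fun s hs => ?_) (q := fun s => !(s.all (fun t => !(t.eval x))))]
          · rw [e1, filter_neg_length]
          · show ((LTree.node false s).eval x) = !(s.all fun t => !(t.eval x))
            rw [eval_node _ _ (hne s hs)]
            simp [List.any_eq_not_all_not]
        have hnegcnt : (cs.map fun c => ((labellings k c).filter (fun τ => !(τ.eval x))).length)
            = (cs.map fun c => ((labellings k c).filter (fun τ => τ.eval x)).length) := by
          refine List.map_congr_left fun c hc => ?_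
          have h1 := filter_neg_length (labellings k c) (fun τ => τ.eval x)
          have h2 := (hch c hc).2 x
          omega
        rw [htrue]
        rw [hnegcnt] at hfalse
        rw [← hLs]
        simp only [List.length_append, List.length_map]
        omega

/-- Count of labellings of `t` satisfying a predicate. -/
def cntF (k : ℕ) (p : LTree k → Bool) (t : PTree) : ℕ :=
  ((labellings k t).filter p).length

lemma Pr_eq10 (k : ℕ) (t : PTree) (a b : Fin k → Bool) :
    Pr k t {g | g a = true ∧ g b = false}
      = (cntF k (fun τ => τ.eval a && !τ.eval b) t : ℝ)
        / ((labellings k t).length : ℝ) := by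
  unfold Pr cntF
  apply congrArg (fun z : ℕ => (z : ℝ) / ((labellings k t).length : ℝ))
  apply congrArg List.length
  apply List.filter_congr
  intro τ _
  by_cases hm : τ.eval ∈ {g | g a = true ∧ g b = false}
  · have hm' : τ.eval a = true ∧ τ.eval b = false := hm
    have he : (τ.eval a && !τ.eval b) = true := by simp [hm'.1, hm'.2]
    rw [he]
    exact @decide_eq_true _ (Classical.propDecidable _) hm
  · have he : (τ.eval a && !τ.eval b) = false := by
      have hm' : ¬(τ.eval a = true ∧ τ.eval b = false) := hm
      cases h1 : τ.eval a <;> cases h2 : τ.eval b <;> simp_all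
    rw [he]
    exact @decide_eq_false _ (Classical.propDecidable _) hm

lemma node_count (k : ℕ) (a b : Fin k → Bool) (cs : List PTree) (h2 : 2 ≤ cs.length) :
    ((labellings k (.node cs)).filter (fun τ => τ.eval a && !τ.eval b)).length
      + (cs.map (cntF k (fun τ => τ.eval a && τ.eval b))).prod
      + (cs.map (cntF k (fun τ => !τ.eval b && !τ.eval a))).prod
    = (cs.map (cntF k (fun τ => τ.eval a))).prod
      + (cs.map (cntF k (fun τ => !τ.eval b))).prod := by
  set Ls := cs.map (labellings k) with hLs
  have hne : ∀ s ∈ Ls.sections, s ≠ [] := by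
    intro s hs h
    subst h
    have hlen := (List.mem_sections.1 hs).length_eq
    simp [hLs] at hlen
    omega
  rw [labellings_node, ← hLs, List.filter_append, List.length_append,
      List.filter_map, List.filter_map, List.length_map, List.length_map]
  have ht : Ls.sections.filter ((fun τ => τ.eval a && !τ.eval b) ∘ LTree.node true)
      = Ls.sections.filter
          (fun s => (s.all fun t => t.eval a) && !(s.all fun t => t.eval b)) := by
    apply List.filter_congr
    intro s hs
    show ((LTree.node true s).eval a && !(LTree.node true s).eval b) = _
    rw [eval_node _ _ (hne s hs), eval_node _ _ (hne s hs)]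
    simp
  have hf : Ls.sections.filter ((fun τ => τ.eval a && !τ.eval b) ∘ LTree.node false)
      = Ls.sections.filter
          (fun s => (s.all fun t => !t.eval b) && !(s.all fun t => !t.eval a)) := by
    apply List.filter_congr
    intro s hs
    show ((LTree.node false s).eval a && !(LTree.node false s).eval b) = _
    rw [eval_node _ _ (hne s hs), eval_node _ _ (hne s hs)]
    simp only [if_neg (Bool.false_ne_true)]
    rw [List.any_eq_not_all_not, List.any_eq_not_all_not]
    cases hA : (s.all fun t => !t.eval a) <;> cases hB : (s.all fun t => !t.eval b) <;> simp
  rw [ht, hf]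
  have s1 : (Ls.sections.filter
        (fun s => (s.all fun t => t.eval a) && !(s.all fun t => t.eval b))).length
      + (Ls.sections.filter
        (fun s => (s.all fun t => t.eval a) && (s.all fun t => t.eval b))).length
      = (Ls.sections.filter (fun s => s.all fun t => t.eval a)).length :=
    filter_split _ _ _
  have s2 : (Ls.sections.filter
        (fun s => (s.all fun t => !t.eval b) && !(s.all fun t => !t.eval a))).length
      + (Ls.sections.filter
        (fun s => (s.all fun t => !t.eval b) && (s.all fun t => !t.eval a))).length
      = (Ls.sections.filter (fun s => s.all fun t => !t.eval b)).length :=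
    filter_split _ _ _
  have c1 : Ls.sections.filter
        (fun s => (s.all fun t => t.eval a) && (s.all fun t => t.eval b))
      = Ls.sections.filter (fun s => s.all fun t => t.eval a && t.eval b) :=
    List.filter_congr fun s _ => list_all_and _ _ _
  have c2 : Ls.sections.filter
        (fun s => (s.all fun t => !t.eval b) && (s.all fun t => !t.eval a))
      = Ls.sections.filter (fun s => s.all fun t => !t.eval b && !t.eval a) :=
    List.filter_congr fun s _ => list_all_and _ _ _
  rw [c1] at s1
  rw [c2] at s2
  have q1 : (Ls.sections.filter (fun s => s.all fun t => t.eval a && t.eval b)).length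
      = (cs.map (cntF k (fun τ => τ.eval a && τ.eval b))).prod := by
    rw [count_sections_all, hLs, List.map_map]; rfl
  have q2 : (Ls.sections.filter (fun s => s.all fun t => !t.eval b && !t.eval a)).length
      = (cs.map (cntF k (fun τ => !τ.eval b && !τ.eval a))).prod := by
    rw [count_sections_all, hLs, List.map_map]; rfl
  have q3 : (Ls.sections.filter (fun s => s.all fun t => t.eval a)).length
      = (cs.map (cntF k (fun τ => τ.eval a))).prod := by
    rw [count_sections_all, hLs, List.map_map]; rfl
  have q4 : (Ls.sections.filter (fun s => s.all fun t => !t.eval b)).length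
      = (cs.map (cntF k (fun τ => !τ.eval b))).prod := by
    rw [count_sections_all, hLs, List.map_map]; rfl
  rw [q1, q3] at s1
  rw [q2, q4] at s2
  omega

lemma list_prod_ne_zero (l : List ℝ) (h : ∀ x ∈ l, x ≠ 0) : l.prod ≠ 0 := by
  induction l with
  | nil => simp
  | cons x l ih =>
    simp only [List.prod_cons]
    exact mul_ne_zero (h x (by simp)) (ih fun y hy => h y (List.mem_cons_of_mem _ hy))

/-- Recursion for `P_t^{10}`: if the root of a shape has
`r ≥ 2` children with subtrees `t_1, …, t_r`, then
`P_t^{10} = 2^(-r) − ∏_i (1/2 − P_{t_i}^{10})`. -/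
theorem andor_two_point_recursion (k : ℕ) (hk : 1 ≤ k) (a b : Fin k → Bool)
    (hab : a ≠ b) (cs : List PTree) (hr : 2 ≤ cs.length)
    (hcs : ∀ c ∈ cs, IsShape c) :
    Pr k (.node cs) {g | g a = true ∧ g b = false}
      = 1 / 2 ^ cs.length
        - (cs.map (fun c => 1 / 2 - Pr k c {g | g a = true ∧ g b = false})).prod := by
  have hch : ∀ c ∈ cs, 0 < (labellings k c).length ∧
      ∀ x, 2 * ((labellings k c).filter (fun τ => τ.eval x)).length
        = (labellings k c).length :=
    fun c hc => half_aux k hk (sizeOf c) c le_rfl (hcs c hc)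
  have hNne : ∀ c ∈ cs, ((labellings k c).length : ℝ) ≠ 0 := by
    intro c hc
    exact_mod_cast (hch c hc).1.ne'
  -- per-child natural-number facts
  have fA : ∀ c ∈ cs, 2 * cntF k (fun τ => τ.eval a) c = (labellings k c).length :=
    fun c hc => (hch c hc).2 a
  have fB : ∀ c ∈ cs, 2 * cntF k (fun τ => !τ.eval b) c = (labellings k c).length := by
    intro c hc
    have h1 := filter_neg_length (labellings k c) (fun τ => τ.eval b)
    have h2 := (hch c hc).2 b
    unfold cntF
    omega
  have fAB : ∀ c ∈ cs, cntF k (fun τ => τ.eval a && !τ.eval b) c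
      + cntF k (fun τ => τ.eval a && τ.eval b) c = cntF k (fun τ => τ.eval a) c :=
    fun c hc => filter_split _ _ _
  have fNN : ∀ c ∈ cs, cntF k (fun τ => !τ.eval b && !τ.eval a) c
      + cntF k (fun τ => τ.eval a && !τ.eval b) c = cntF k (fun τ => !τ.eval b) c := by
    intro c hc
    have h : cntF k (fun τ => !τ.eval b && !τ.eval a) c
        + cntF k (fun τ => !τ.eval b && τ.eval a) c = cntF k (fun τ => !τ.eval b) c :=
      filter_split _ _ _
    have h2 : cntF k (fun τ => !τ.eval b && τ.eval a) c
        = cntF k (fun τ => τ.eval a && !τ.eval b) c :=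
      congrArg List.length (filter_and_comm _ _ _)
    omega
  -- map-level real identities
  have m1 : cs.map (fun c => (cntF k (fun τ => τ.eval a) c : ℝ))
      = cs.map (fun c => ((labellings k c).length : ℝ) / 2) := by
    refine List.map_congr_left fun c hc => ?_
    have h : ((labellings k c).length : ℝ) = 2 * (cntF k (fun τ => τ.eval a) c : ℝ) := by
      exact_mod_cast (fA c hc).symm
    rw [h]; ring
  have m2 : cs.map (fun c => (cntF k (fun τ => !τ.eval b) c : ℝ))
      = cs.map (fun c => ((labellings k c).length : ℝ) / 2) := by
    refine List.map_congr_left fun c hc => ?_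
    have h : ((labellings k c).length : ℝ) = 2 * (cntF k (fun τ => !τ.eval b) c : ℝ) := by
      exact_mod_cast (fB c hc).symm
    rw [h]; ring
  have m3 : cs.map (fun c => (cntF k (fun τ => τ.eval a && τ.eval b) c : ℝ))
      = cs.map (fun c => ((labellings k c).length : ℝ) / 2
          - (cntF k (fun τ => τ.eval a && !τ.eval b) c : ℝ)) := by
    refine List.map_congr_left fun c hc => ?_
    have h1 := fAB c hc
    have h2 := fA c hc
    have e : ((labellings k c).length : ℝ)
        = 2 * (cntF k (fun τ => τ.eval a && τ.eval b) c : ℝ)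
          + 2 * (cntF k (fun τ => τ.eval a && !τ.eval b) c : ℝ) := by
      exact_mod_cast (by omega :
        (labellings k c).length = 2 * cntF k (fun τ => τ.eval a && τ.eval b) c
          + 2 * cntF k (fun τ => τ.eval a && !τ.eval b) c)
    rw [e]; ring
  have m4 : cs.map (fun c => (cntF k (fun τ => !τ.eval b && !τ.eval a) c : ℝ))
      = cs.map (fun c => ((labellings k c).length : ℝ) / 2
          - (cntF k (fun τ => τ.eval a && !τ.eval b) c : ℝ)) := by
    refine List.map_congr_left fun c hc => ?_
    have h1 := fNN c hc
    have h2 := fB c hc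
    have e : ((labellings k c).length : ℝ)
        = 2 * (cntF k (fun τ => !τ.eval b && !τ.eval a) c : ℝ)
          + 2 * (cntF k (fun τ => τ.eval a && !τ.eval b) c : ℝ) := by
      exact_mod_cast (by omega :
        (labellings k c).length = 2 * cntF k (fun τ => !τ.eval b && !τ.eval a) c
          + 2 * cntF k (fun τ => τ.eval a && !τ.eval b) c)
    rw [e]; ring
  -- the counting identity, cast to ℝ
  have key := node_count k a b cs hr
  have keyR := congrArg (fun n : ℕ => (n : ℝ)) key
  simp only [Nat.cast_add] at keyR
  rw [cast_prod_map, cast_prod_map, cast_prod_map, cast_prod_map] at keyR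
  rw [m1, m2, m3, m4] at keyR
  -- rewrite the goal
  rw [Pr_eq10]
  have hmapPr : cs.map (fun c => 1 / 2 - Pr k c {g | g a = true ∧ g b = false})
      = cs.map (fun c => 1 / 2
          - (cntF k (fun τ => τ.eval a && !τ.eval b) c : ℝ)
            / ((labellings k c).length : ℝ)) :=
    List.map_congr_left fun c _ => by rw [Pr_eq10]
  rw [hmapPr]
  have hlen : (labellings k (PTree.node cs)).length
      = 2 * (cs.map fun c => (labellings k c).length).prod := by
    rw [labellings_node]
    simp only [List.length_append, List.length_map]
    rw [length_sections, List.map_map]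
    have h : (List.length ∘ labellings k) = fun c => (labellings k c).length := rfl
    rw [h]
    omega
  rw [hlen, Nat.cast_mul, cast_prod_map, Nat.cast_ofNat]
  -- abbreviations
  have hPN : (cs.map fun c => ((labellings k c).length : ℝ)).prod ≠ 0 :=
    list_prod_ne_zero _ (by
      intro x hx
      simp only [List.mem_map] at hx
      obtain ⟨c, hc, rfl⟩ := hx
      exact hNne c hc)
  have e2 : (cs.map fun c => ((labellings k c).length : ℝ) / 2).prod
      / (cs.map fun c => ((labellings k c).length : ℝ)).prod = 1 / 2 ^ cs.length := by
    rw [prod_map_div _ _ _ hNne]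
    have h : cs.map (fun c => (((labellings k c).length : ℝ) / 2)
          / ((labellings k c).length : ℝ)) = cs.map (fun _ => (1 : ℝ) / 2) :=
      List.map_congr_left fun c hc => by
        have h := hNne c hc
        field_simp
    rw [h, List.map_const', List.prod_replicate, div_pow, one_pow]
  have e3 : (cs.map fun c => ((labellings k c).length : ℝ) / 2
        - (cntF k (fun τ => τ.eval a && !τ.eval b) c : ℝ)).prod
      / (cs.map fun c => ((labellings k c).length : ℝ)).prod
      = (cs.map (fun c => 1 / 2
          - (cntF k (fun τ => τ.eval a && !τ.eval b) c : ℝ)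
            / ((labellings k c).length : ℝ))).prod := by
    rw [prod_map_div _ _ _ hNne]
    refine congrArg List.prod (List.map_congr_left fun c hc => ?_)
    have h := hNne c hc
    field_simp
  have hnum : (cntF k (fun τ => τ.eval a && !τ.eval b) (PTree.node cs) : ℝ)
      = 2 * ((cs.map fun c => ((labellings k c).length : ℝ) / 2).prod
          - (cs.map fun c => ((labellings k c).length : ℝ) / 2
              - (cntF k (fun τ => τ.eval a && !τ.eval b) c : ℝ)).prod) := by
    have keyR' : (cntF k (fun τ => τ.eval a && !τ.eval b) (PTree.node cs) : ℝ)
        + (cs.map fun c => ((labellings k c).length : ℝ) / 2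
            - (cntF k (fun τ => τ.eval a && !τ.eval b) c : ℝ)).prod
        + (cs.map fun c => ((labellings k c).length : ℝ) / 2
            - (cntF k (fun τ => τ.eval a && !τ.eval b) c : ℝ)).prod
        = (cs.map fun c => ((labellings k c).length : ℝ) / 2).prod
          + (cs.map fun c => ((labellings k c).length : ℝ) / 2).prod := keyR
    linarith
  rw [hnum, mul_div_mul_left _ _ (two_ne_zero (α := ℝ)), sub_div, e2, e3]
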